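/- Let G be a (K₂ ∪ 2K₁)-free graph. If S is a cut set of G such that G − S has at least three components, then all components of G − S are trivial (single vertices). -/

import Mathlib

open SimpleGraph

/-- The disjoint union of an edge (on vertices 0,1) and `k` isolated vertices. -/
def K2uK (k : ℕ) : SimpleGraph (Fin (k + 2)) :=
  SimpleGraph.fromRel (fun a b => a = 0 ∧ b = 1)

/-- `G` contains no induced copy of `H`. -/
def HFree {α β : Type*} (H : SimpleGraph α) (G : SimpleGraph β) : Prop :=
  IsEmpty (H ↪g G)

/-- The number of connected components of a graph. -/
noncomputable def numComp {V : Type*} (G : SimpleGraph V) : ℕ :=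
  Nat.card G.ConnectedComponent

/-- `S` is a cut set of `G`: removing `S` leaves at least two components. -/
def IsCutSet {V : Type*} (G : SimpleGraph V) (S : Set V) : Prop :=
  2 ≤ numComp (G.induce (Sᶜ : Set V))

theorem stmt_5 {V : Type*} [Fintype V] (G : SimpleGraph V)
    (hfree : HFree (K2uK 2) G) (S : Set V) (hcut : IsCutSet G S)
    (h3 : 3 ≤ numComp (G.induce (Sᶜ : Set V))) :
    ∀ D : (G.induce (Sᶜ : Set V)).ConnectedComponent, D.supp.Subsingleton := by
  classical
  set G' := G.induce (Sᶜ : Set V) with hG'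
  intro D
  by_contra hns
  rw [Set.not_subsingleton_iff] at hns
  obtain ⟨a, ha, b, hb, hne⟩ := hns
  rw [ConnectedComponent.mem_supp_iff] at ha hb
  have hreach : G'.Reachable a b := (ConnectedComponent.eq).mp (ha.trans hb.symm)
  obtain ⟨w⟩ := hreach
  obtain ⟨b', hadj', -⟩ : ∃ x, G'.Adj a x ∧ True := by
    cases w with
    | nil => exact absurd rfl hne
    | cons h p => exact ⟨_, h, trivial⟩
  have hb' : G'.connectedComponentMk b' = D :=
    ((ConnectedComponent.eq).mpr hadj'.symm.reachable).trans ha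
  -- get two other components
  have hfin : Finite G'.ConnectedComponent := by
    have : Finite (Sᶜ : Set V) := Set.toFinite _
    exact Quot.finite _
  have hcard : 3 ≤ Fintype.card G'.ConnectedComponent := by
    have := h3
    rwa [numComp, Nat.card_eq_fintype_card] at this
  have hErase : 1 < (Finset.univ.erase D).card := by
    rw [Finset.card_erase_of_mem (Finset.mem_univ D), Finset.card_univ]
    omega
  obtain ⟨C1, hC1, C2, hC2, hC12⟩ := Finset.one_lt_card.mp hErase
  obtain ⟨c, hc⟩ := C1.exists_rep
  obtain ⟨d, hd⟩ := C2.exists_rep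
  have hc : G'.connectedComponentMk c = C1 := hc
  have hd : G'.connectedComponentMk d = C2 := hd
  have hC1D : C1 ≠ D := (Finset.mem_erase.mp hC1).1
  have hC2D : C2 ≠ D := (Finset.mem_erase.mp hC2).1
  have hadjcc : ∀ x y : (Sᶜ : Set V), G.Adj x y →
      G'.connectedComponentMk x = G'.connectedComponentMk y := fun x y h =>
    (ConnectedComponent.eq).mpr (SimpleGraph.Adj.reachable (show G'.Adj x y from h))
  have hG : G.Adj a b' := hadj'
  -- non-adjacency facts
  have hnac : ¬ G.Adj a c := fun h => hC1D (by rw [← hc, ← ha]; exact (hadjcc a c h).symm)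
  have hnbc : ¬ G.Adj b' c := fun h => hC1D (by rw [← hc, ← hb']; exact (hadjcc b' c h).symm)
  have hnad : ¬ G.Adj a d := fun h => hC2D (by rw [← hd, ← ha]; exact (hadjcc a d h).symm)
  have hnbd : ¬ G.Adj b' d := fun h => hC2D (by rw [← hd, ← hb']; exact (hadjcc b' d h).symm)
  have hncd : ¬ G.Adj c d := fun h => hC12 ((hc.symm.trans (hadjcc c d h)).trans hd)
  -- distinctness facts (in V)
  have vne : ∀ x y : (Sᶜ : Set V), G'.connectedComponentMk x ≠ G'.connectedComponentMk y →
      (x : V) ≠ y := fun x y h hxy => h (by rw [Subtype.val_injective hxy])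
  have dab : (a : V) ≠ b' := fun h => G.loopless.irrefl _ (h ▸ hG)
  have dac : (a : V) ≠ c := vne a c (by rw [ha, hc]; exact hC1D.symm)
  have dbc : (b' : V) ≠ c := vne b' c (by rw [hb', hc]; exact hC1D.symm)
  have dad : (a : V) ≠ d := vne a d (by rw [ha, hd]; exact hC2D.symm)
  have dbd : (b' : V) ≠ d := vne b' d (by rw [hb', hd]; exact hC2D.symm)
  have dcd : (c : V) ≠ d := vne c d (by rw [hc, hd]; exact hC12)
  refine hfree.false ⟨⟨![↑a, ↑b', ↑c, ↑d], ?_⟩, ?_⟩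
  · intro i j hij
    fin_cases i <;> fin_cases j <;>
      simp only [Matrix.cons_val_zero, Matrix.cons_val_one, Matrix.head_cons,
        Matrix.cons_val_two, Matrix.tail_cons, Matrix.cons_val_three] at hij <;>
      first
        | rfl
        | exact absurd hij dab | exact absurd hij.symm dab
        | exact absurd hij dac | exact absurd hij.symm dac
        | exact absurd hij dbc | exact absurd hij.symm dbc
        | exact absurd hij dad | exact absurd hij.symm dad
        | exact absurd hij dbd | exact absurd hij.symm dbd
        | exact absurd hij dcd | exact absurd hij.symm dcd
  · intro i j
    fin_cases i <;> fin_cases j <;>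
      simp only [Matrix.cons_val_zero, Matrix.cons_val_one, Matrix.head_cons,
        Matrix.cons_val_two, Matrix.tail_cons, Matrix.cons_val_three,
        Function.Embedding.coeFn_mk, K2uK, fromRel_adj] <;>
      first
        | exact iff_of_true hG (by decide)
        | exact iff_of_true hG.symm (by decide)
        | exact iff_of_false (G.loopless.irrefl _) (by decide)
        | exact iff_of_false hnac (by decide)
        | exact iff_of_false (fun h => hnac h.symm) (by decide)
        | exact iff_of_false hnbc (by decide)
        | exact iff_of_false (fun h => hnbc h.symm) (by decide)
        | exact iff_of_false hnad (by decide)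
        | exact iff_of_false (fun h => hnad h.symm) (by decide)
        | exact iff_of_false hnbd (by decide)
        | exact iff_of_false (fun h => hnbd h.symm) (by decide)
        | exact iff_of_false hncd (by decide)
        | exact iff_of_false (fun h => hncd h.symm) (by decide)
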